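/- Every surjective, interval-preserving monotone function φ : [1]^m → [1]^n admits a section in the category of interval-preserving monotone functions: there exists an interval-preserving monotone function s : [1]^n → [1]^m with φ ∘ s = id. -/

import Mathlib

/-- A function between preorders is interval-preserving if the image of every
(nonempty) interval is an interval. -/
def IsIntervalPreserving {α β : Type*} [Preorder α] [Preorder β] (f : α → β) : Prop :=
  ∀ p q : α, p ≤ q → ∃ a b : β, f '' Set.Icc p q = Set.Icc a b

/-- The "atom" at coordinate `j`. -/
def sing {n : ℕ} (j : Fin n) : Fin n → Bool := fun j' => decide (j' = j)

/-- The "coatom" at coordinate `j`. -/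
def cosing {n : ℕ} (j : Fin n) : Fin n → Bool := fun j' => !decide (j' = j)

lemma pile {k : ℕ} {x y : Fin k → Bool} : x ≤ y ↔ ∀ i, x i = true → y i = true := by
  simp [Pi.le_def, Bool.le_iff_imp]

/-- Pointwise structure lemma: a proper up-set/down-set interval cover of the cube
forces an atom/coatom pair. -/
lemma atom_coatom {n : ℕ} {u v : Fin n → Bool}
    (hcover : ∀ y : Fin n → Bool, u ≤ y ∨ y ≤ v)
    (hu : u ≠ ⊥) (hv : v ≠ ⊤) : ∃ j, u = sing j ∧ v = cosing j := by
  have hfa : ∀ w : Bool, w ≤ !w → w = false := by decide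
  have hfb : ∀ w : Bool, (!w) ≤ w → w = true := by decide
  have hft : ∀ w : Bool, true ≤ w → w = true := by decide
  have hff : ∀ w : Bool, w ≤ false → w = false := by decide
  have h1 : ∀ j, u j = false → v j = true := by
    intro j hj
    rcases hcover (fun j' => !u j') with h | h
    · exact absurd (funext fun j' => hfa _ (h j') : u = ⊥) hu
    · have := h j
      simp only [hj, Bool.not_false] at this
      exact hft _ this
  have h2 : ∀ j, v j = true → u j = false := by
    intro j hj
    rcases hcover (fun j' => !v j') with h | h
    · have := h j
      simp only [hj, Bool.not_true] at this
      exact hff _ this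
    · exfalso
      apply hv
      funext j'
      have hh : (!(v j')) ≤ v j' := h j'
      exact hfb _ hh
  have h3 : ∃ j, u j = true := by
    by_contra h
    push_neg at h
    exact hu (funext fun j => by
      have := h j
      cases hj : u j
      · rfl
      · exact absurd hj this)
  obtain ⟨j, hj⟩ := h3
  have h4 : ∀ j', u j' = true → j' = j := by
    intro j' hj'
    by_contra hne
    rcases hcover (sing j) with h | h
    · have := h j'
      rw [hj'] at this
      have : sing j j' = true := hft _ this
      simp [sing, hne] at this
    · have hvj : v j = true := by
        have := h j
        have : sing j j = true → v j = true := fun hh => hft _ (hh ▸ this)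
        exact this (by simp [sing])
      rw [h2 j hvj] at hj
      exact Bool.false_ne_true hj
  refine ⟨j, ?_, ?_⟩
  · funext j'
    by_cases hne : j' = j
    · subst hne; simp [sing, hj]
    · simp only [sing, hne, decide_false]
      cases hj'' : u j'
      · rfl
      · exact absurd (h4 j' hj'') hne
  · funext j'
    by_cases hne : j' = j
    · subst hne
      simp only [cosing, decide_true, Bool.not_true]
      cases hv' : v j'
      · rfl
      · rw [h2 j' hv'] at hj; exact absurd hj Bool.false_ne_true
    · simp only [cosing, hne, decide_false, Bool.not_false]
      apply h1
      cases hu' : u j'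
      · rfl
      · exact absurd (h4 j' hu') hne

/-- Every surjective interval-preserving monotone function
`φ : [1]^m → [1]^n` admits a section that is itself monotone and interval-preserving. -/
theorem stmt_7 {m n : ℕ} (φ : (Fin m → Bool) → (Fin n → Bool)) (hm : Monotone φ)
    (hs : Function.Surjective φ) (hip : IsIntervalPreserving φ) :
    ∃ s : (Fin n → Bool) → (Fin m → Bool),
      Monotone s ∧ IsIntervalPreserving s ∧ φ ∘ s = id := by
  classical
  -- images of intervals are the expected intervals
  have himg : ∀ p q : Fin m → Bool, p ≤ q → φ '' Set.Icc p q = Set.Icc (φ p) (φ q) := by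
    intro p q hpq
    obtain ⟨c, d, hcd⟩ := hip p q hpq
    have hφp : φ p ∈ Set.Icc c d := hcd ▸ ⟨p, ⟨le_refl p, hpq⟩, rfl⟩
    have hφq : φ q ∈ Set.Icc c d := hcd ▸ ⟨q, ⟨hpq, le_refl q⟩, rfl⟩
    have hcle : c ≤ d := le_trans hφp.1 hφp.2
    have hc : c = φ p := by
      have hmem : c ∈ φ '' Set.Icc p q := hcd ▸ (Set.mem_Icc.2 ⟨le_refl c, hcle⟩)
      obtain ⟨x, hx, hxc⟩ := hmem
      exact le_antisymm (hφp.1) (hxc ▸ hm hx.1)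
    have hd : d = φ q := by
      have hmem : d ∈ φ '' Set.Icc p q := hcd ▸ (Set.mem_Icc.2 ⟨hcle, le_refl d⟩)
      obtain ⟨x, hx, hxd⟩ := hmem
      exact le_antisymm (hxd ▸ hm hx.2) (hφq.2)
    rw [hcd, hc, hd]
  have hφbot : φ ⊥ = ⊥ := by
    obtain ⟨x, hx⟩ := hs ⊥
    exact le_bot_iff.1 (hx ▸ hm bot_le)
  have hφtop : φ ⊤ = ⊤ := by
    obtain ⟨x, hx⟩ := hs ⊤
    exact top_le_iff.1 (hx ▸ hm le_top)
  -- choose a minimal interval mapping onto everything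
  set F : (Fin m → Bool) → (Fin m → Bool) → Finset (Fin m) :=
    fun a b => Finset.univ.filter (fun i => a i ≠ b i) with hF
  have hex : ∃ k, ∃ a b : Fin m → Bool,
      a ≤ b ∧ φ a = ⊥ ∧ φ b = ⊤ ∧ (F a b).card = k :=
    ⟨_, ⊥, ⊤, bot_le, hφbot, hφtop, rfl⟩
  obtain ⟨a, b, hab, hφa, hφb, hcard⟩ := Nat.find_spec hex
  have hmin : ∀ a' b' : Fin m → Bool, a' ≤ b' → φ a' = ⊥ → φ b' = ⊤ →
      Nat.find hex ≤ (F a' b').card :=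
    fun a' b' h1 h2 h3 => Nat.find_min' hex ⟨a', b', h1, h2, h3, rfl⟩
  -- surjectivity of φ on [a,b]
  have hsurj : ∀ y : Fin n → Bool, ∃ x, a ≤ x ∧ x ≤ b ∧ φ x = y := by
    intro y
    have : y ∈ φ '' Set.Icc a b := by
      rw [himg a b hab, hφa, hφb]
      exact Set.mem_Icc.2 ⟨bot_le, le_top⟩
    obtain ⟨x, hx, hxy⟩ := this
    exact ⟨x, hx.1, hx.2, hxy⟩
  -- strictness from minimality
  have hstrict : ∀ i, a i = false → b i = true →
      φ (Function.update a i true) ≠ ⊥ ∧ φ (Function.update b i false) ≠ ⊤ := by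
    intro i hai hbi
    have himem : i ∈ F a b := by
      simp only [hF, Finset.mem_filter, Finset.mem_univ, true_and, hai, hbi]
      exact Bool.false_ne_true
    have hpos : 0 < (F a b).card := Finset.card_pos.2 ⟨i, himem⟩
    constructor
    · intro h
      have hle : Function.update a i true ≤ b := by
        intro i'
        by_cases h' : i' = i
        · subst h'; rw [Function.update_self, hbi]
        · rw [Function.update_of_ne h']; exact hab i'
      have hFeq : F (Function.update a i true) b = (F a b).erase i := by
        ext i'
        by_cases h' : i' = i
        · subst h'
          simp [hF, Function.update_self, hbi]
        · simp [hF, Function.update_of_ne h', h']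
      have := hmin _ b hle h hφb
      rw [hFeq, Finset.card_erase_of_mem himem, hcard] at this
      omega
    · intro h
      have hle : a ≤ Function.update b i false := by
        intro i'
        by_cases h' : i' = i
        · subst h'; rw [Function.update_self, hai]
        · rw [Function.update_of_ne h']; exact hab i'
      have hFeq : F a (Function.update b i false) = (F a b).erase i := by
        ext i'
        by_cases h' : i' = i
        · subst h'
          simp [hF, Function.update_self, hai]
        · simp [hF, Function.update_of_ne h', h']
      have := hmin a _ hle hφa h
      rw [hFeq, Finset.card_erase_of_mem himem, hcard] at this
      omega
  -- covering property
  have hcover : ∀ i, a i = false → b i = true → ∀ y : Fin n → Bool,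
      φ (Function.update a i true) ≤ y ∨ y ≤ φ (Function.update b i false) := by
    intro i hai hbi y
    obtain ⟨x, hax, hxb, hxy⟩ := hsurj y
    cases hxi : x i
    · right
      rw [← hxy]
      apply hm
      intro i'
      by_cases h' : i' = i
      · subst h'; rw [Function.update_self, hxi]
      · rw [Function.update_of_ne h']; exact hxb i'
    · left
      rw [← hxy]
      apply hm
      intro i'
      by_cases h' : i' = i
      · subst h'; rw [Function.update_self, hxi]
      · rw [Function.update_of_ne h']; exact hax i'
  -- for each free coordinate, the atom/coatom structure
  have hatom : ∀ i, a i = false → b i = true →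
      ∃ j, φ (Function.update a i true) = sing j ∧
        φ (Function.update b i false) = cosing j := by
    intro i hai hbi
    exact atom_coatom (hcover i hai hbi) (hstrict i hai hbi).1 (hstrict i hai hbi).2
  -- surjectivity on atoms: build β
  have hβex : ∀ j : Fin n, ∃ i, a i = false ∧ b i = true ∧
      φ (Function.update a i true) = sing j ∧
      φ (Function.update b i false) = cosing j := by
    intro j
    obtain ⟨x, hax, hxb, hxy⟩ := hsurj (sing j)
    have hxa : x ≠ a := by
      intro h
      rw [h, hφa] at hxy
      have : (⊥ : Fin n → Bool) j = sing j j := by rw [hxy]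
      simp [sing] at this
    obtain ⟨i, hi⟩ := Function.ne_iff.1 hxa
    have hai : a i = false := by
      have := hax i
      cases h' : a i
      · rfl
      · exfalso; apply hi; rw [h']
        exact le_antisymm (Bool.le_true _) (h' ▸ this)
    have hxi : x i = true := by
      cases h' : x i
      · exact absurd (h' ▸ hai ▸ rfl : x i = a i) hi
      · rfl
    have hbi : b i = true := by
      have := hxb i
      rw [hxi] at this
      exact le_antisymm (Bool.le_true _) this
    obtain ⟨j₀, hj₀, hj₀'⟩ := hatom i hai hbi
    have hle : Function.update a i true ≤ x := by
      intro i'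
      by_cases h' : i' = i
      · subst h'; rw [Function.update_self, hxi]
      · rw [Function.update_of_ne h']; exact hax i'
    have : sing j₀ ≤ sing j := by rw [← hj₀, ← hxy]; exact hm hle
    have hjj : j₀ = j := by
      have := this j₀
      simp [sing] at this
      cases h'' : decide (j₀ = j)
      · rw [h''] at this; exact absurd this (by simp)
      · exact of_decide_eq_true h''
    exact ⟨i, hai, hbi, hjj ▸ hj₀, hjj ▸ hj₀'⟩
  choose β hβa hβb hβs hβc using hβex
  have hβinj : Function.Injective β := by
    intro j j' h
    have : sing j = sing j' := by rw [← hβs j, ← hβs j', h]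
    have := congrFun this j
    simp [sing] at this
    exact this
  -- the section
  set s : (Fin n → Bool) → (Fin m → Bool) :=
    fun y i => if h : ∃ j, β j = i then y h.choose else a i with hsdef
  have hsβ : ∀ y j, s y (β j) = y j := by
    intro y j
    have h : ∃ j', β j' = β j := ⟨j, rfl⟩
    have hc : h.choose = j := hβinj h.choose_spec
    simp only [hsdef, dif_pos h, hc]
  have hsa : ∀ y i, (¬ ∃ j, β j = i) → s y i = a i := by
    intro y i h
    simp only [hsdef, dif_neg h]
  have hsab : ∀ y i, a i ≤ s y i ∧ s y i ≤ b i := by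
    intro y i
    by_cases h : ∃ j, β j = i
    · obtain ⟨j, hj⟩ := h
      subst hj
      rw [hsβ, hβa j, hβb j]
      exact ⟨Bool.false_le _, Bool.le_true _⟩
    · rw [hsa y i h]
      exact ⟨le_refl _, hab i⟩
  have hsmono : Monotone s := by
    intro y y' hyy i
    by_cases h : ∃ j, β j = i
    · simp only [hsdef, dif_pos h]
      exact hyy _
    · simp only [hsdef, dif_neg h]
      exact le_refl _
  have hsec : ∀ y, φ (s y) = y := by
    intro y
    apply le_antisymm
    · rw [pile]
      intro j
      intro hj
      by_contra hyj
      have hyjf : y j = false := by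
        cases h' : y j
        · rfl
        · exact absurd h' hyj
      have hle : s y ≤ Function.update b (β j) false := by
        intro i
        by_cases h' : i = β j
        · subst h'; rw [Function.update_self, hsβ, hyjf]
        · rw [Function.update_of_ne h']; exact (hsab y i).2
      have := hm hle
      rw [hβc j] at this
      have := this j
      rw [hj] at this
      simp only [cosing, decide_true, Bool.not_true] at this
      exact absurd this (by decide : ¬ (true ≤ false))
    · rw [pile]
      intro j hj
      have hle : Function.update a (β j) true ≤ s y := by
        intro i
        by_cases h' : i = β j
        · subst h'; rw [Function.update_self, hsβ, hj]
        · rw [Function.update_of_ne h']; exact (hsab y i).1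
      have := hm hle
      rw [hβs j] at this
      have := this j
      exact (by decide : ∀ w : Bool, true ≤ w → w = true) _ ((by simp [sing] : sing j j = true) ▸ this)
  refine ⟨s, hsmono, ?_, funext fun y => hsec y⟩
  intro p q hpq
  refine ⟨s p, s q, ?_⟩
  ext z
  constructor
  · rintro ⟨y, ⟨h1, h2⟩, rfl⟩
    exact Set.mem_Icc.2 ⟨hsmono h1, hsmono h2⟩
  · intro hz
    obtain ⟨h1, h2⟩ := Set.mem_Icc.1 hz
    refine ⟨fun j => z (β j), ⟨?_, ?_⟩, ?_⟩
    · intro j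
      have := h1 (β j)
      rwa [hsβ] at this
    · intro j
      have := h2 (β j)
      rwa [hsβ] at this
    · funext i
      by_cases h : ∃ j, β j = i
      · obtain ⟨j, hj⟩ := h
        subst hj
        exact hsβ (fun j' => z (β j')) j
      · have e1 := h1 i
        have e2 := h2 i
        rw [hsa p i h] at e1
        rw [hsa q i h] at e2
        exact (hsa (fun j' => z (β j')) i h).trans (le_antisymm e1 e2)
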